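/- arXiv:2502.07199 — 2 statements merged into one kernel-verified Lean document; each statement's English description precedes it below -/
import Mathlib

section
/- Fix integers K ≥ 2, reals σ > 0, c > 0 with Kc ≥ 1, δ ∈ (0,1), and means μ_1 > μ_2 ≥ … ≥ μ_K with gap Δ = μ_1 − μ_2. Let t_W and n be positive integers with t_W ≥ (2σ/Δ)·√(Kc·ln(K/δ)) and n ≥ t_W/(Kc), and let X_{k,t} (k ∈ {1,…,K}, t ∈ {t_W+1,…,t_W+n}) be mutually independent real random variables with X_{k,t} ~ N(μ_k, σ²/t). Define the empirical means μ̂'_k = (1/n)·Σ_{t=t_W+1}^{t_W+n} X_{k,t}. Then with probability at least 1 − δ, μ̂'_1 > μ̂'_j for every j ≠ 1 (i.e., the arm with the highest empirical mean is arm 1). Moreover, the cost of this procedure with t_W = (2σ/Δ)·√(Kc·ln(K/δ)) and n = t_W/(Kc) satisfies (t_W + n) + c·K·n = (2σ/Δ)·(2 + 1/(Kc))·√(Kc·ln(K/δ)) ≤ (6σ/Δ)·√(Kc·ln(K/δ)). -/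
open MeasureTheory ProbabilityTheory Real
open scoped NNReal
open scoped ENNReal

lemma my_gauss_shift (m t x : ℝ) (v : ℝ≥0) (hv : v ≠ 0) :
    Real.exp (t * x) * gaussianPDFReal m v x
      = Real.exp (m * t + (v : ℝ) * t ^ 2 / 2) * gaussianPDFReal (m + (v : ℝ) * t) v x := by
  have hv' : (v : ℝ) ≠ 0 := by exact_mod_cast hv
  simp only [gaussianPDFReal]
  rw [mul_left_comm, mul_left_comm (Real.exp (m * t + (v : ℝ) * t ^ 2 / 2)),
    ← Real.exp_add, ← Real.exp_add]
  congr 1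
  rw [Real.exp_eq_exp]
  field_simp
  ring

lemma my_pdf_fun (m : ℝ) (v : ℝ≥0) :
    (fun x => ENNReal.ofReal (gaussianPDFReal m v x))
      = fun x => (Real.toNNReal (gaussianPDFReal m v x) : ℝ≥0∞) := by
  funext x; rfl

lemma my_smul_eq (m t : ℝ) (v : ℝ≥0) (hv : v ≠ 0) :
    (fun x => ((Real.toNNReal (gaussianPDFReal m v x) : ℝ≥0) : ℝ) • Real.exp (t * x))
      = fun x => Real.exp (m * t + (v : ℝ) * t ^ 2 / 2)
          * gaussianPDFReal (m + (v : ℝ) * t) v x := by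
  funext x
  rw [Real.coe_toNNReal _ (gaussianPDFReal_nonneg m v x), smul_eq_mul, mul_comm,
    my_gauss_shift m t x v hv]

lemma my_integrable_exp_gauss (m t : ℝ) (v : ℝ≥0) (hv : v ≠ 0) :
    Integrable (fun x => Real.exp (t * x)) (gaussianReal m v) := by
  rw [gaussianReal_of_var_ne_zero _ hv, gaussianPDF_def, my_pdf_fun,
    integrable_withDensity_iff_integrable_coe_smul
      ((measurable_gaussianPDFReal m v).real_toNNReal)]
  rw [my_smul_eq m t v hv]
  exact (integrable_gaussianPDFReal _ _).const_mul _

lemma my_integral_exp_gauss (m t : ℝ) (v : ℝ≥0) (hv : v ≠ 0) :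
    ∫ x, Real.exp (t * x) ∂(gaussianReal m v)
      = Real.exp (m * t + (v : ℝ) * t ^ 2 / 2) := by
  rw [gaussianReal_of_var_ne_zero _ hv, gaussianPDF_def, my_pdf_fun,
    integral_withDensity_eq_integral_smul
      ((measurable_gaussianPDFReal m v).real_toNNReal)]
  have := my_smul_eq m t v hv
  simp only [NNReal.smul_def] at this ⊢
  rw [this, integral_const_mul, integral_gaussianPDFReal_eq_one _ hv, mul_one]

lemma my_mgf_gauss {Ω : Type*} [MeasurableSpace Ω] {P : Measure Ω} {X : Ω → ℝ}
    (hX : Measurable X) {m : ℝ} {v : ℝ≥0} (hv : v ≠ 0)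
    (h : P.map X = gaussianReal m v) (t : ℝ) :
    mgf X P t = Real.exp (m * t + (v : ℝ) * t ^ 2 / 2) ∧
      Integrable (fun ω => Real.exp (t * X ω)) P := by
  have hmeas : AEStronglyMeasurable (fun x => Real.exp (t * x)) (P.map X) :=
    (Real.continuous_exp.comp (continuous_const.mul continuous_id)).aestronglyMeasurable
  constructor
  · rw [mgf, ← integral_map hX.aemeasurable hmeas, h, my_integral_exp_gauss m t v hv]
  · have h2 := my_integrable_exp_gauss m t v hv
    rw [← h] at h2
    exact (integrable_map_measure hmeas hX.aemeasurable).mp h2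


set_option maxHeartbeats 2000000 in
/-- **Theorem 1, WTCS.**
With `K ≥ 2` arms, per-sample cost `c` with `Kc ≥ 1`, confidence `δ`, means
`μ 0 > μ 1 ≥ … ≥ μ (K-1)` and gap `Δ = μ 0 - μ 1`, if the learner waits `tW ≥ (2σ/Δ)√(Kc ln(K/δ))`
rounds and then samples every arm in each of the rounds `tW+1, …, tW+n` with `n ≥ tW/(Kc)`
(rewards being independent Gaussians `N(μ k, σ²/t)`), then with probability at least `1 - δ`
the arm with the highest empirical mean is arm `1` (index `0` here).  Moreover, with
`tW = (2σ/Δ)√(Kc ln(K/δ))` and `n = tW/(Kc)`, the cost `(tW + n) + c·K·n` equals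
`(2σ/Δ)(2 + 1/(Kc))√(Kc ln(K/δ))` and is at most `(6σ/Δ)√(Kc ln(K/δ))`. -/
theorem wtcs_correctness_and_cost
    {Ω : Type*} [MeasurableSpace Ω] (P : Measure Ω) [IsProbabilityMeasure P]
    (K : ℕ) (hK : 2 ≤ K) (σ c δ : ℝ) (hσ : 0 < σ) (hc : 0 < c)
    (hKc : 1 ≤ (K : ℝ) * c) (hδ0 : 0 < δ) (hδ1 : δ < 1)
    (μ : Fin K → ℝ)
    (hμtop : μ ⟨1, by omega⟩ < μ ⟨0, by omega⟩)
    (hμmono : ∀ i j : Fin K, i ≤ j → μ j ≤ μ i)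
    (Δ : ℝ) (hΔ : Δ = μ ⟨0, by omega⟩ - μ ⟨1, by omega⟩)
    (tW n : ℕ) (htW0 : 0 < tW) (hn0 : 0 < n)
    (htW : (2 * σ / Δ) * Real.sqrt ((K : ℝ) * c * Real.log ((K : ℝ) / δ)) ≤ (tW : ℝ))
    (hn : (tW : ℝ) / ((K : ℝ) * c) ≤ (n : ℝ))
    (X : Fin K → Fin n → Ω → ℝ)
    (hXmeas : ∀ k i, Measurable (X k i))
    (hXdist : ∀ (k : Fin K) (i : Fin n),
      P.map (X k i) = gaussianReal (μ k)
        (Real.toNNReal (σ ^ 2 / ((tW : ℝ) + 1 + (i : ℕ)))))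
    (hXindep : iIndepFun
      (fun p : Fin K × Fin n => X p.1 p.2) P)
    (muhat : Fin K → Ω → ℝ)
    (hmuhat : ∀ k ω, muhat k ω = (1 / (n : ℝ)) * ∑ i : Fin n, X k i ω) :
    ENNReal.ofReal (1 - δ) ≤
      P {ω | ∀ j : Fin K, j ≠ ⟨0, by omega⟩ → muhat j ω < muhat ⟨0, by omega⟩ ω} ∧
    ((2 * σ / Δ) * Real.sqrt ((K : ℝ) * c * Real.log ((K : ℝ) / δ)) +
        ((2 * σ / Δ) * Real.sqrt ((K : ℝ) * c * Real.log ((K : ℝ) / δ))) / ((K : ℝ) * c)) +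
      c * (K : ℝ) *
        (((2 * σ / Δ) * Real.sqrt ((K : ℝ) * c * Real.log ((K : ℝ) / δ))) / ((K : ℝ) * c)) =
      (2 * σ / Δ) * (2 + 1 / ((K : ℝ) * c)) *
        Real.sqrt ((K : ℝ) * c * Real.log ((K : ℝ) / δ)) ∧
    ((2 * σ / Δ) * Real.sqrt ((K : ℝ) * c * Real.log ((K : ℝ) / δ)) +
        ((2 * σ / Δ) * Real.sqrt ((K : ℝ) * c * Real.log ((K : ℝ) / δ))) / ((K : ℝ) * c)) +
      c * (K : ℝ) *
        (((2 * σ / Δ) * Real.sqrt ((K : ℝ) * c * Real.log ((K : ℝ) / δ))) / ((K : ℝ) * c)) ≤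
      (6 * σ / Δ) * Real.sqrt ((K : ℝ) * c * Real.log ((K : ℝ) / δ)) := by
  have hK0 : (0 : ℝ) < K := by
    have : (2 : ℝ) ≤ (K : ℝ) := by exact_mod_cast hK
    linarith
  have hKC : (0 : ℝ) < (K : ℝ) * c := by positivity
  have hKC' : ((K : ℝ) * c) ≠ 0 := ne_of_gt hKC
  have hΔpos : 0 < Δ := by rw [hΔ]; linarith [hμtop]
  have hΔ' : Δ ≠ 0 := ne_of_gt hΔpos
  have hK2 : (2 : ℝ) ≤ (K : ℝ) := by exact_mod_cast hK
  have hL : 0 < Real.log ((K : ℝ) / δ) := by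
    apply Real.log_pos
    rw [lt_div_iff₀ hδ0]
    nlinarith
  set L : ℝ := Real.log ((K : ℝ) / δ) with hLdef
  set s : ℝ := Real.sqrt ((K : ℝ) * c * L) with hsdef
  have hs0 : 0 ≤ s := Real.sqrt_nonneg _
  have hCostEq :
      ((2 * σ / Δ) * s + ((2 * σ / Δ) * s) / ((K : ℝ) * c)) +
        c * (K : ℝ) * (((2 * σ / Δ) * s) / ((K : ℝ) * c)) =
      (2 * σ / Δ) * (2 + 1 / ((K : ℝ) * c)) * s := by
    field_simp
    ring
  refine ⟨?_, hCostEq, ?_⟩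
  · -- main probability bound
    have htWpos : (0 : ℝ) < tW := by exact_mod_cast htW0
    have hnpos : (0 : ℝ) < n := by exact_mod_cast hn0
    set zero : Fin K := ⟨0, by omega⟩ with hzero
    set one : Fin K := ⟨1, by omega⟩ with hone
    set tstar : ℝ := Δ * tW / (2 * σ ^ 2) with htstardef
    have htstar0 : 0 ≤ tstar := by positivity
    have hvpos : ∀ i : Fin n, (0 : ℝ) < σ ^ 2 / ((tW : ℝ) + 1 + (i : ℕ)) := by
      intro i; positivity
    have hvne : ∀ i : Fin n, Real.toNNReal (σ ^ 2 / ((tW : ℝ) + 1 + (i : ℕ))) ≠ 0 :=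
      fun i => (Real.toNNReal_pos.mpr (hvpos i)).ne'
    have hvval : ∀ i : Fin n,
        ((Real.toNNReal (σ ^ 2 / ((tW : ℝ) + 1 + (i : ℕ))) : ℝ≥0) : ℝ)
          = σ ^ 2 / ((tW : ℝ) + 1 + (i : ℕ)) :=
      fun i => Real.coe_toNNReal _ (hvpos i).le
    have hvle : ∀ i : Fin n, σ ^ 2 / ((tW : ℝ) + 1 + (i : ℕ)) ≤ σ ^ 2 / tW := by
      intro i
      apply div_le_div_of_nonneg_left (by positivity) htWpos
      have : (0 : ℝ) ≤ (i : ℕ) := by positivity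
      linarith
    have hmuhatMeas : ∀ k, Measurable (muhat k) := by
      intro k
      have hk : muhat k = fun ω => (1 / (n : ℝ)) * ∑ i : Fin n, X k i ω := funext (hmuhat k)
      rw [hk]
      exact (Finset.measurable_sum _ fun i _ => hXmeas k i).const_mul _
    -- exponent bound
    have hExp : Real.exp (-(n : ℝ) * Δ * tstar + (n : ℝ) * σ ^ 2 * tstar ^ 2 / tW) ≤ δ / K := by
      have hE : -(n : ℝ) * Δ * tstar + (n : ℝ) * σ ^ 2 * tstar ^ 2 / tW
          = -((n : ℝ) * tW * Δ ^ 2 / (4 * σ ^ 2)) := by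
        rw [htstardef]; field_simp; ring
      rw [hE]
      have hss : s * s = (K : ℝ) * c * L := Real.mul_self_sqrt (by positivity)
      have htw2 : (4 * σ ^ 2 / Δ ^ 2) * ((K : ℝ) * c * L) ≤ (tW : ℝ) ^ 2 := by
        have h1 := mul_self_le_mul_self (by positivity : (0 : ℝ) ≤ 2 * σ / Δ * s) htW
        calc (4 * σ ^ 2 / Δ ^ 2) * ((K : ℝ) * c * L)
            = (2 * σ / Δ * s) * (2 * σ / Δ * s) := by rw [← hss]; field_simp; ring
          _ ≤ (tW : ℝ) * tW := h1
          _ = (tW : ℝ) ^ 2 := (sq (tW : ℝ)).symm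
      have hntW : (tW : ℝ) ^ 2 / ((K : ℝ) * c) ≤ (n : ℝ) * tW := by
        have h2 := mul_le_mul_of_nonneg_right hn htWpos.le
        calc (tW : ℝ) ^ 2 / ((K : ℝ) * c) = (tW : ℝ) / ((K : ℝ) * c) * tW := by ring
          _ ≤ (n : ℝ) * tW := h2
      have h3 : 4 * σ ^ 2 / Δ ^ 2 * L ≤ (n : ℝ) * tW := by
        have h4 : (4 * σ ^ 2 / Δ ^ 2) * ((K : ℝ) * c * L) / ((K : ℝ) * c)
            ≤ (tW : ℝ) ^ 2 / ((K : ℝ) * c) := by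
          gcongr
        calc 4 * σ ^ 2 / Δ ^ 2 * L
            = (4 * σ ^ 2 / Δ ^ 2) * ((K : ℝ) * c * L) / ((K : ℝ) * c) := by
              field_simp
          _ ≤ (tW : ℝ) ^ 2 / ((K : ℝ) * c) := h4
          _ ≤ (n : ℝ) * tW := hntW
      have h5 : L ≤ (n : ℝ) * tW * Δ ^ 2 / (4 * σ ^ 2) := by
        rw [le_div_iff₀ (by positivity)]
        calc L * (4 * σ ^ 2) = (4 * σ ^ 2 / Δ ^ 2 * L) * Δ ^ 2 := by field_simp
          _ ≤ (n : ℝ) * tW * Δ ^ 2 := by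
              apply mul_le_mul_of_nonneg_right h3 (by positivity)
      calc Real.exp (-((n : ℝ) * tW * Δ ^ 2 / (4 * σ ^ 2))) ≤ Real.exp (-L) := by
            apply Real.exp_le_exp.mpr; linarith
        _ = δ / K := by
            rw [hLdef, Real.exp_neg, Real.exp_log (by positivity), inv_div]
    -- per-arm tail bound
    have key : ∀ j : Fin K, j ≠ zero →
        P {ω | muhat zero ω ≤ muhat j ω} ≤ ENNReal.ofReal (δ / K) := by
      intro j hj
      have hjz : zero ≠ j := fun h => hj h.symm
      set cf : Fin K → ℝ := fun k => if k = j then 1 else if k = zero then -1 else 0 with hcf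
      set Y : Fin K × Fin n → Ω → ℝ := fun p ω => cf p.1 * X p.1 p.2 ω with hYdef
      have hYmeas : ∀ p, Measurable (Y p) := fun p => (hXmeas p.1 p.2).const_mul _
      have hYindep : iIndepFun Y P :=
        hXindep.comp (fun p x => cf p.1 * x) (fun p => measurable_id.const_mul _)
      clear_value cf Y
      have hint : ∀ p : Fin K × Fin n,
          Integrable (fun ω => Real.exp (tstar * Y p ω)) P := by
        intro p
        have := (my_mgf_gauss (hXmeas p.1 p.2) (hvne p.2) (hXdist p.1 p.2)
          (tstar * cf p.1)).2
        simpa [hYdef, mul_assoc] using this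
      have hmgfY : ∀ p : Fin K × Fin n, mgf (Y p) P tstar
          = Real.exp (μ p.1 * (tstar * cf p.1)
              + (σ ^ 2 / ((tW : ℝ) + 1 + (p.2 : ℕ))) * (tstar * cf p.1) ^ 2 / 2) := by
        intro p
        have h1 : mgf (Y p) P tstar = mgf (X p.1 p.2) P (tstar * cf p.1) := by
          simp only [mgf, hYdef]
          congr 1
          funext ω
          ring_nf
        rw [h1, (my_mgf_gauss (hXmeas p.1 p.2) (hvne p.2) (hXdist p.1 p.2) _).1, hvval p.2]
      set B1 : ℝ := (μ zero - Δ) * tstar + σ ^ 2 / tW * tstar ^ 2 / 2 with hB1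
      set B2 : ℝ := -(μ zero * tstar) + σ ^ 2 / tW * tstar ^ 2 / 2 with hB2
      set B : Fin K → ℝ := fun k => if k = j then B1 else if k = zero then B2 else 0 with hB
      clear_value B1 B2
      clear_value B
      have hfactor : ∀ p : Fin K × Fin n, mgf (Y p) P tstar ≤ Real.exp (B p.1) := by
        intro p
        rw [hmgfY p]
        apply Real.exp_le_exp.mpr
        rcases eq_or_ne p.1 j with h1 | h1
        · have hcf1 : cf p.1 = 1 := by rw [hcf]; simp [h1]
          have hB1' : B p.1 = B1 := by rw [hB]; simp [h1]
          rw [hcf1, hB1', mul_one, hB1]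
          have hΔz : Δ = μ zero - μ one := hΔ
          have hone_le : one ≤ j := by
            have hval : j.val ≠ 0 := by
              intro hval0
              exact hj (by rw [hzero]; exact Fin.ext hval0)
            rw [hone, Fin.le_def]
            exact Nat.one_le_iff_ne_zero.mpr hval
          have hmono := hμmono one j hone_le
          have hmj : μ p.1 ≤ μ zero - Δ := by rw [h1, hΔz]; linarith
          have hv' := hvle p.2
          have ht2 : (0 : ℝ) ≤ tstar ^ 2 / 2 := by positivity
          have hA := mul_le_mul_of_nonneg_right hmj htstar0
          have hB' := mul_le_mul_of_nonneg_right hv' ht2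
          linarith
        · rcases eq_or_ne p.1 zero with h2 | h2
          · have hcf1 : cf p.1 = -1 := by rw [hcf]; simp [h1, h2, hjz]
            have hB2' : B p.1 = B2 := by rw [hB]; simp [h1, h2, hjz]
            rw [hcf1, hB2', hB2, h2]
            have hv' := hvle p.2
            have ht2 : (0 : ℝ) ≤ tstar ^ 2 / 2 := by positivity
            have hB' := mul_le_mul_of_nonneg_right hv' ht2
            have hsq : (tstar * -1) ^ 2 = tstar ^ 2 := by ring
            rw [hsq]
            linarith
          · have hcf1 : cf p.1 = 0 := by rw [hcf]; simp [h1, h2]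
            have hB0 : B p.1 = 0 := by rw [hB]; simp [h1, h2]
            rw [hcf1, hB0]
            simp
      set S : Ω → ℝ := ∑ p : Fin K × Fin n, Y p with hSdef
      clear_value S
      have hSint : Integrable (fun ω => Real.exp (tstar * S ω)) P := by
        rw [hSdef]
        exact hYindep.integrable_exp_mul_sum hYmeas (fun p _ => hint p)
      have hchern := measure_ge_le_exp_mul_mgf (μ := P) (X := S) 0 htstar0 hSint
      have hmgfS : mgf S P tstar = ∏ p : Fin K × Fin n, mgf (Y p) P tstar := by
        rw [hSdef]
        exact hYindep.mgf_sum hYmeas Finset.univ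
      have hBsum : ∑ p : Fin K × Fin n, B p.1 = (n : ℝ) * (B1 + B2) := by
        rw [Fintype.sum_prod_type]
        have hrow : ∀ k : Fin K, ∑ _i : Fin n, B k = (n : ℝ) * B k := by
          intro k
          rw [Finset.sum_const, Finset.card_univ, Fintype.card_fin, nsmul_eq_mul]
        rw [Finset.sum_congr rfl (fun k _ => hrow k)]
        have hBsplit : ∀ k : Fin K,
            (n : ℝ) * B k = (if k = j then (n : ℝ) * B1 else 0)
              + (if k = zero then (n : ℝ) * B2 else 0) := by
          intro k
          rw [hB]
          rcases eq_or_ne k j with rfl | h1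
          · simp [hj]
          · rcases eq_or_ne k zero with rfl | h2
            · simp [h1]
            · simp [h1, h2]
        rw [Finset.sum_congr rfl (fun k _ => hBsplit k), Finset.sum_add_distrib,
          Finset.sum_ite_eq' Finset.univ j, Finset.sum_ite_eq' Finset.univ zero]
        simp [mul_add]
      have hprodle : ∏ p : Fin K × Fin n, mgf (Y p) P tstar
          ≤ Real.exp ((n : ℝ) * (B1 + B2)) := by
        calc ∏ p : Fin K × Fin n, mgf (Y p) P tstar
            ≤ ∏ p : Fin K × Fin n, Real.exp (B p.1) :=
              Finset.prod_le_prod (fun p _ => mgf_nonneg) (fun p _ => hfactor p)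
          _ = Real.exp (∑ p : Fin K × Fin n, B p.1) := (Real.exp_sum _ _).symm
          _ = Real.exp ((n : ℝ) * (B1 + B2)) := by rw [hBsum]
      have htail : (P {ω | 0 ≤ S ω}).toReal ≤ δ / K := by
        calc (P {ω | 0 ≤ S ω}).toReal
            ≤ Real.exp (-tstar * 0) * mgf S P tstar := hchern
          _ = mgf S P tstar := by simp
          _ ≤ Real.exp ((n : ℝ) * (B1 + B2)) := hmgfS ▸ hprodle
          _ ≤ δ / K := by
              have harg : (n : ℝ) * (B1 + B2)
                  = -(n : ℝ) * Δ * tstar + (n : ℝ) * σ ^ 2 * tstar ^ 2 / tW := by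
                rw [hB1, hB2]; field_simp; ring
              rw [harg]; exact hExp
      have hset : {ω | muhat zero ω ≤ muhat j ω} = {ω | 0 ≤ S ω} := by
        ext ω
        simp only [Set.mem_setOf_eq, hmuhat]
        have hSω : S ω = ∑ i : Fin n, X j i ω - ∑ i : Fin n, X zero i ω := by
          rw [hSdef, Finset.sum_apply, Fintype.sum_prod_type]
          have hrow : ∀ k : Fin K, ∑ i : Fin n, Y (k, i) ω
              = (if k = j then ∑ i : Fin n, X j i ω else 0)
                + (if k = zero then -∑ i : Fin n, X zero i ω else 0) := by
            intro k
            rcases eq_or_ne k j with rfl | h1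
            · simp [hYdef, hcf, hj]
            · rcases eq_or_ne k zero with rfl | h2
              · simp [hYdef, hcf, h1, Finset.sum_neg_distrib]
              · simp [hYdef, hcf, h1, h2]
          rw [Finset.sum_congr rfl (fun k _ => hrow k), Finset.sum_add_distrib,
            Finset.sum_ite_eq' Finset.univ j, Finset.sum_ite_eq' Finset.univ zero]
          simp [sub_eq_add_neg]
        rw [hSω, sub_nonneg]
        constructor
        · intro h
          have := mul_le_mul_of_nonneg_left h (le_of_lt hnpos)
          have hn1 : (n : ℝ) * (1 / (n : ℝ)) = 1 := by field_simp
          nlinarith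
        · intro h
          apply mul_le_mul_of_nonneg_left h
          positivity
      rw [hset]
      rw [← ENNReal.ofReal_toReal (measure_ne_top P _)]
      exact ENNReal.ofReal_le_ofReal htail
    -- union bound
    set good := {ω | ∀ j : Fin K, j ≠ zero → muhat j ω < muhat zero ω} with hgooddef
    have hgmeas : MeasurableSet good := by
      have : good = ⋂ j : Fin K, ⋂ (_ : j ≠ zero), {ω | muhat j ω < muhat zero ω} := by
        ext ω; simp [hgooddef]
      rw [this]
      exact MeasurableSet.iInter fun j => MeasurableSet.iInter fun _ =>
        measurableSet_lt (hmuhatMeas j) (hmuhatMeas zero)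
    have hcomplsub : goodᶜ ⊆ ⋃ j : Fin K,
        (if j = zero then (∅ : Set Ω) else {ω | muhat zero ω ≤ muhat j ω}) := by
      intro ω hω
      simp only [hgooddef, Set.mem_compl_iff, Set.mem_setOf_eq, not_forall] at hω
      obtain ⟨j, hj, hle⟩ := hω
      refine Set.mem_iUnion.mpr ⟨j, ?_⟩
      rw [if_neg hj]
      exact not_lt.mp hle
    have hbad : P goodᶜ ≤ ENNReal.ofReal δ := by
      calc P goodᶜ
          ≤ ∑' j : Fin K, P (if j = zero then (∅ : Set Ω)
              else {ω | muhat zero ω ≤ muhat j ω}) :=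
            (measure_mono hcomplsub).trans (measure_iUnion_le _)
        _ ≤ ∑' _j : Fin K, ENNReal.ofReal (δ / K) := by
            apply ENNReal.tsum_le_tsum
            intro j
            by_cases h : j = zero
            · simp [h]
            · rw [if_neg h]; exact key j h
        _ = (K : ℝ≥0∞) * ENNReal.ofReal (δ / K) := by
            rw [tsum_fintype]
            simp [Finset.sum_const, Finset.card_univ, nsmul_eq_mul]
        _ = ENNReal.ofReal δ := by
            rw [show ((K : ℝ≥0∞)) = ENNReal.ofReal (K : ℝ) by
              simp [ENNReal.ofReal_natCast], ← ENNReal.ofReal_mul hK0.le]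
            congr 1
            field_simp
    have hone : P good + P goodᶜ = 1 := by
      rw [measure_add_measure_compl hgmeas, measure_univ]
    have hfinal : ENNReal.ofReal (1 - δ) + ENNReal.ofReal δ ≤ P good + ENNReal.ofReal δ := by
      rw [← ENNReal.ofReal_add (by linarith) hδ0.le, show (1 - δ) + δ = 1 by ring]
      calc ENNReal.ofReal 1 = 1 := ENNReal.ofReal_one
        _ = P good + P goodᶜ := hone.symm
        _ ≤ P good + ENNReal.ofReal δ := add_le_add_right hbad _
    exact (ENNReal.add_le_add_iff_right ENNReal.ofReal_ne_top).mp hfinal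
  · -- cost inequality
    rw [hCostEq]
    have h1 : 1 / ((K : ℝ) * c) ≤ 1 := by rw [div_le_one hKC]; exact hKc
    calc (2 * σ / Δ) * (2 + 1 / ((K : ℝ) * c)) * s
        ≤ (2 * σ / Δ) * 3 * s := by
          apply mul_le_mul_of_nonneg_right _ hs0
          apply mul_le_mul_of_nonneg_left (by linarith) (by positivity)
      _ = (6 * σ / Δ) * s := by ring
end

section
/- Let σ > 0, λ > 0, Δ > 0, δ ∈ (0,1), and K ≥ 1 be reals, and set L = ln(36·K·σ²/(λ·δ·Δ²)). Assume L ≥ 1. Define T = (6σ/Δ)·√(λ·L). Then 4·(σ/T)·√(λ·ln(2·K·T²/(λ²·δ))) ≤ Δ. -/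
open Real

/-- For `σ, λ, Δ > 0`, `δ ∈ (0,1)` and `K ≥ 1` with
`L = ln(36Kσ²/(λδΔ²)) ≥ 1`, the time `T = (6σ/Δ)√(λL)` satisfies
`4 (σ/T) √(λ ln(2KT²/(λ²δ))) ≤ Δ`; i.e. the elimination condition `4 U_T ≤ Δ` holds at `T`. -/
theorem elimination_time_bound
    (σ lam Δ δ K : ℝ) (hσ : 0 < σ) (hlam : 0 < lam) (hΔ : 0 < Δ)
    (hδ0 : 0 < δ) (hδ1 : δ < 1) (hK : 1 ≤ K)
    (L : ℝ) (hL : L = Real.log (36 * K * σ ^ 2 / (lam * δ * Δ ^ 2))) (hL1 : 1 ≤ L)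
    (T : ℝ) (hT : T = (6 * σ / Δ) * Real.sqrt (lam * L)) :
    4 * (σ / T) * Real.sqrt (lam * Real.log (2 * K * T ^ 2 / (lam ^ 2 * δ))) ≤ Δ := by
  have hK0 : (0:ℝ) < K := lt_of_lt_of_le one_pos hK
  have hL0 : (0:ℝ) < L := lt_of_lt_of_le one_pos hL1
  have hlamL : 0 < lam * L := mul_pos hlam hL0
  have hs : 0 < Real.sqrt (lam * L) := Real.sqrt_pos.mpr hlamL
  set s := Real.sqrt (lam * L) with hsdef
  have hs2 : s ^ 2 = lam * L := Real.sq_sqrt hlamL.le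
  have hT0 : 0 < T := by
    rw [hT]; positivity
  set A := 36 * K * σ ^ 2 / (lam * δ * Δ ^ 2) with hAdef
  have hA0 : 0 < A := by positivity
  have hlogA : Real.log A = L := hL.symm
  -- T² = (36 σ²/Δ²) λ L
  have hT2 : T ^ 2 = 36 * σ ^ 2 / Δ ^ 2 * (lam * L) := by
    rw [hT, mul_pow, hs2]; ring
  -- argument equals 2 A L
  have harg : 2 * K * T ^ 2 / (lam ^ 2 * δ) = 2 * A * L := by
    rw [hT2, hAdef]
    field_simp
  have hlog : Real.log (2 * K * T ^ 2 / (lam ^ 2 * δ))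
      = Real.log 2 + L + Real.log L := by
    rw [harg, Real.log_mul (by positivity) (ne_of_gt hL0),
        Real.log_mul (by norm_num) (ne_of_gt hA0), hlogA]
  have hlog2 : Real.log 2 ≤ 1 := by
    have := Real.log_le_sub_one_of_pos (x := 2) (by norm_num)
    linarith
  have hlogL : Real.log L ≤ L - 1 := Real.log_le_sub_one_of_pos hL0
  have hM : Real.log (2 * K * T ^ 2 / (lam ^ 2 * δ)) ≤ 9 / 4 * L := by
    rw [hlog]; nlinarith
  have hsqle : Real.sqrt (lam * Real.log (2 * K * T ^ 2 / (lam ^ 2 * δ)))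
      ≤ 3 / 2 * s := by
    have h1 : lam * Real.log (2 * K * T ^ 2 / (lam ^ 2 * δ)) ≤ (3/2 * s) ^ 2 := by
      have : (3/2 * s) ^ 2 = 9/4 * (lam * L) := by rw [mul_pow, hs2]; ring
      rw [this]
      nlinarith
    calc Real.sqrt (lam * Real.log (2 * K * T ^ 2 / (lam ^ 2 * δ)))
        ≤ Real.sqrt ((3/2 * s) ^ 2) := Real.sqrt_le_sqrt h1
      _ = 3/2 * s := Real.sqrt_sq (by positivity)
  have hσT : σ / T = Δ / (6 * s) := by
    rw [hT]
    field_simp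
  calc 4 * (σ / T) * Real.sqrt (lam * Real.log (2 * K * T ^ 2 / (lam ^ 2 * δ)))
      ≤ 4 * (σ / T) * (3 / 2 * s) := by
        apply mul_le_mul_of_nonneg_left hsqle (by positivity)
    _ = Δ := by rw [hσT]; field_simp; ring
end
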